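/- Under the assumptions that a : [0,1] → ℝ is absolutely continuous, a(x₀)=0 for some x₀ ∈ (0,1), a > 0 on [0,1]\{x₀}, and (x-x₀)a'(x) ≤ K a(x) a.e. with K ∈ (0,1), the function 1/a is integrable on (0,1). -/

import Mathlib

open MeasureTheory Set

lemma my_ftc {w w' : ℝ → ℝ} {c d : ℝ} (hcd : c ≤ d)
    (hw : ∀ t ∈ Icc c d, HasDerivAt w (w' t) t)
    (hw' : ContinuousOn w' (Icc c d)) :
    ∫ s in Ioc c d, w' s = w d - w c := by
  have h1 : ∀ s ∈ uIcc c d, HasDerivAt w (w' s) s := by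
    intro s hs; rw [uIcc_of_le hcd] at hs; exact hw s hs
  have h2 : IntervalIntegrable w' volume c d := by
    exact (hw'.mono (uIcc_of_le hcd).subset).intervalIntegrable
  have := intervalIntegral.integral_eq_sub_of_hasDerivAt h1 h2
  rwa [intervalIntegral.integral_of_le hcd] at this

/-- Fubini-based integration by parts against a primitive: if `f` is integrable on `[c,d]`
and `w` is `C¹` on `[c,d]`, then `∫ f·w = (∫f)·w(d) - ∫ F·w'` where `F(s) = ∫_c^s f`. -/
lemma my_ibp {f w w' : ℝ → ℝ} {c d : ℝ} (hcd : c ≤ d)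
    (hf : IntegrableOn f (Icc c d))
    (hw : ∀ t ∈ Icc c d, HasDerivAt w (w' t) t)
    (hw' : ContinuousOn w' (Icc c d)) :
    ∫ t in Ioc c d, f t * w t
      = (∫ t in Ioc c d, f t) * w d - ∫ s in Ioc c d, (∫ t in Ioc c s, f t) * w' s := by
  have hfI : IntegrableOn f (Ioc c d) := hf.mono_set Ioc_subset_Icc_self
  have hw'I : IntegrableOn w' (Ioc c d) :=
    (hw'.integrableOn_Icc).mono_set Ioc_subset_Icc_self
  have hwc : ContinuousOn w (Icc c d) := fun t ht => (hw t ht).continuousAt.continuousWithinAt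
  have key : ∀ t ∈ Icc c d, ∫ s in Ioc t d, w' s = w d - w t := by
    intro t ht
    exact my_ftc ht.2 (fun s hs => hw s ⟨le_trans ht.1 hs.1, hs.2⟩)
      (hw'.mono (Icc_subset_Icc ht.1 le_rfl))
  set g : ℝ × ℝ → ℝ := fun p => f p.1 * w' p.2 with hg_def
  set S : Set (ℝ × ℝ) := {p | p.1 < p.2} with hS_def
  have hS : MeasurableSet S := measurableSet_lt measurable_fst measurable_snd
  have hgint : Integrable g ((volume.restrict (Ioc c d)).prod (volume.restrict (Ioc c d))) :=
    hfI.mul_prod hw'I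
  have hgi : Integrable (S.indicator g)
      ((volume.restrict (Ioc c d)).prod (volume.restrict (Ioc c d))) := hgint.indicator hS
  have e1 : EqOn (fun t => f t * w t)
      (fun t => f t * w d - f t * ∫ s in Ioc t d, w' s) (Ioc c d) := by
    intro t ht
    dsimp only
    rw [key t (Ioc_subset_Icc_self ht)]; ring
  rw [setIntegral_congr_fun measurableSet_Ioc e1]
  have i1 : IntegrableOn (fun t => f t * w d) (Ioc c d) := hfI.mul_const _
  have i3 : IntegrableOn (fun t => f t * w t) (Ioc c d) :=
    (hf.mul_continuousOn hwc isCompact_Icc).mono_set Ioc_subset_Icc_self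
  have i2 : IntegrableOn (fun t => f t * ∫ s in Ioc t d, w' s) (Ioc c d) := by
    apply IntegrableOn.congr_fun (i1.sub i3) _ measurableSet_Ioc
    intro t ht
    dsimp only [Pi.sub_apply]
    rw [key t (Ioc_subset_Icc_self ht)]; ring
  rw [integral_sub i1 i2, integral_mul_const]
  congr 1
  have e2 : EqOn (fun t => f t * ∫ s in Ioc t d, w' s)
      (fun t => ∫ s in Ioc c d, S.indicator g (t, s)) (Ioc c d) := by
    intro t ht
    have hind : ∀ s, S.indicator g (t, s) = (Ioi t).indicator (fun s => f t * w' s) s := by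
      intro s
      by_cases h : t < s <;> simp [hS_def, hg_def, Set.indicator_apply, h]
    dsimp only
    simp only [hind]
    rw [setIntegral_indicator measurableSet_Ioi, Set.Ioc_inter_Ioi,
      max_eq_right (le_of_lt ht.1), integral_const_mul]
  rw [setIntegral_congr_fun measurableSet_Ioc e2]
  have swap : ∫ t in Ioc c d, ∫ s in Ioc c d, S.indicator g (t, s)
      = ∫ s in Ioc c d, ∫ t in Ioc c d, S.indicator g (t, s) := by
    apply integral_integral_swap
    convert hgi using 1
    rfl
  rw [swap]
  apply setIntegral_congr_fun measurableSet_Ioc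
  intro s hs
  have hind : ∀ t, S.indicator g (t, s) = (Iio s).indicator (fun t => f t * w' s) t := by
    intro t
    by_cases h : t < s <;> simp [hS_def, hg_def, Set.indicator_apply, h]
  dsimp only
  simp only [hind]
  have hset : Ioc c d ∩ Iio s = Ioo c s := by
    ext t
    simp only [mem_inter_iff, mem_Ioc, mem_Iio, mem_Ioo]
    exact ⟨fun ⟨⟨h1, _⟩, h3⟩ => ⟨h1, h3⟩, fun ⟨h1, h3⟩ => ⟨⟨h1, h3.le.trans hs.2⟩, h3⟩⟩
  rw [setIntegral_indicator measurableSet_Iio, hset, integral_mul_const,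
    ← integral_Ioc_eq_integral_Ioo]

/-- Integration by parts for a function `A` given as a primitive of an integrable function,
against a `C¹` weight `w`. -/
lemma my_ibp2 {f A w w' : ℝ → ℝ} {c d : ℝ} (hcd : c ≤ d)
    (hf : IntegrableOn f (Icc c d))
    (hA : ∀ s ∈ Icc c d, A s - A c = ∫ t in Ioc c s, f t)
    (hw : ∀ t ∈ Icc c d, HasDerivAt w (w' t) t)
    (hw' : ContinuousOn w' (Icc c d)) :
    A d * w d - A c * w c = ∫ t in Ioc c d, (f t * w t + A t * w' t) := by
  have hwc : ContinuousOn w (Icc c d) := fun t ht => (hw t ht).continuousAt.continuousWithinAt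
  have hw'I : IntegrableOn w' (Ioc c d) :=
    (hw'.integrableOn_Icc).mono_set Ioc_subset_Icc_self
  have hAc : ContinuousOn A (Icc c d) := by
    have h1 : ContinuousOn (fun x => A c + ∫ t in Ioc c x, f t) (Icc c d) :=
      continuousOn_const.add (intervalIntegral.continuousOn_primitive hf)
    apply h1.congr
    intro x hx
    have := hA x hx
    dsimp only
    linarith
  have i3 : IntegrableOn (fun t => f t * w t) (Ioc c d) :=
    (hf.mul_continuousOn hwc isCompact_Icc).mono_set Ioc_subset_Icc_self
  have i4 : IntegrableOn (fun t => A t * w' t) (Ioc c d) :=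
    ((hAc.integrableOn_Icc).mul_continuousOn hw' isCompact_Icc).mono_set Ioc_subset_Icc_self
  rw [integral_add i3 i4]
  have hibp := my_ibp hcd hf hw hw'
  have e : EqOn (fun s => (∫ t in Ioc c s, f t) * w' s)
      (fun s => A s * w' s - A c * w' s) (Ioc c d) := by
    intro s hs
    dsimp only
    rw [← hA s (Ioc_subset_Icc_self hs)]; ring
  rw [setIntegral_congr_fun measurableSet_Ioc e] at hibp
  have i5 : IntegrableOn (fun s => A c * w' s) (Ioc c d) := hw'I.const_mul _
  rw [integral_sub i4 i5, integral_const_mul, my_ftc hcd hw hw',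
    ← hA d ⟨hcd, le_refl d⟩] at hibp
  rw [hibp]; ring

/-- Lemma 2.1.2: in the weakly degenerate case (K ∈ (0,1)), `1/a` is integrable on `(0,1)`. -/
theorem stmt1 (a : ℝ → ℝ) (x₀ K : ℝ)
    (hx₀ : x₀ ∈ Set.Ioo (0:ℝ) 1)
    (ha0 : a x₀ = 0)
    (hpos : ∀ x ∈ Set.Icc (0:ℝ) 1, x ≠ x₀ → 0 < a x)
    (hAC : MeasureTheory.IntegrableOn (deriv a) (Set.Icc 0 1) ∧
      ∀ x ∈ Set.Icc (0:ℝ) 1, a x = a 0 + ∫ t in (0:ℝ)..x, deriv a t)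
    (hK : K ∈ Set.Ioo (0:ℝ) 1)
    (hineq : ∀ᵐ x ∂(MeasureTheory.volume.restrict (Set.Icc (0:ℝ) 1)),
      (x - x₀) * deriv a x ≤ K * a x) :
    MeasureTheory.IntegrableOn (fun x => 1 / a x) (Set.Ioo 0 1) := by
  obtain ⟨hx0, hx1⟩ := hx₀
  obtain ⟨hK0, hK1⟩ := hK
  obtain ⟨hfint, hrep⟩ := hAC
  -- increments of `a` as integrals of `deriv a`
  have hsub : ∀ c d : ℝ, c ∈ Icc (0:ℝ) 1 → d ∈ Icc (0:ℝ) 1 → c ≤ d →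
      a d - a c = ∫ t in Ioc c d, deriv a t := by
    intro c d hc hd hcd
    have hic : IntervalIntegrable (deriv a) volume 0 c := by
      rw [intervalIntegrable_iff_integrableOn_Ioc_of_le hc.1]
      exact hfint.mono_set ((Ioc_subset_Icc_self).trans (Icc_subset_Icc le_rfl hc.2))
    have hid : IntervalIntegrable (deriv a) volume 0 d := by
      rw [intervalIntegrable_iff_integrableOn_Ioc_of_le hd.1]
      exact hfint.mono_set ((Ioc_subset_Icc_self).trans (Icc_subset_Icc le_rfl hd.2))
    have hsl := intervalIntegral.integral_interval_sub_left hid hic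
    rw [hrep c hc, hrep d hd, ← intervalIntegral.integral_of_le hcd, ← hsl]
    ring
  -- right-side lower bound
  have hR : ∀ x ∈ Ioo x₀ 1, a 1 * (1 - x₀) ^ (-K) ≤ a x * (x - x₀) ^ (-K) := by
    intro x hx
    set w : ℝ → ℝ := fun t => (t - x₀) ^ (-K) with hw_def
    set w' : ℝ → ℝ := fun t => (-K) * (t - x₀) ^ (-K - 1) with hw'_def
    have hwderiv : ∀ t ∈ Icc x 1, HasDerivAt w (w' t) t := by
      intro t ht
      have hpos' : (0:ℝ) < t - x₀ := by
        have := ht.1; have := hx.1; simp only [mem_Icc] at *; linarith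
      have h1 : HasDerivAt (fun y : ℝ => y - x₀) 1 t := (hasDerivAt_id t).sub_const x₀
      have h2 : HasDerivAt (fun u : ℝ => u ^ (-K)) ((-K) * (t - x₀) ^ (-K - 1)) (t - x₀) :=
        Real.hasDerivAt_rpow_const (Or.inl (ne_of_gt hpos'))
      have h3 := h2.comp t h1
      simpa [hw_def, hw'_def, Function.comp_def] using h3
    have hw'cont : ContinuousOn w' (Icc x 1) := by
      apply ContinuousOn.mul continuousOn_const
      apply ContinuousOn.rpow_const (continuousOn_id.sub continuousOn_const)
      intro t ht
      left
      have hpos' : (0:ℝ) < t - x₀ := by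
        have := ht.1; have := hx.1; linarith
      exact ne_of_gt hpos'
    have hxIcc : x ∈ Icc (0:ℝ) 1 := ⟨le_of_lt (lt_trans hx0 hx.1), le_of_lt hx.2⟩
    have hA : ∀ s ∈ Icc x 1, a s - a x = ∫ t in Ioc x s, deriv a t := fun s hs =>
      hsub x s hxIcc ⟨le_trans hxIcc.1 hs.1, hs.2⟩ hs.1
    have hfx : IntegrableOn (deriv a) (Icc x 1) :=
      hfint.mono_set (Icc_subset_Icc hxIcc.1 le_rfl)
    have hid := my_ibp2 (le_of_lt hx.2) hfx hA hwderiv hw'cont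
    have hle : ∫ t in Ioc x 1, (deriv a t * w t + a t * w' t) ≤ 0 := by
      apply integral_nonpos_of_ae
      have hsubs : Ioc x 1 ⊆ Icc (0:ℝ) 1 := fun t ht =>
        ⟨le_trans hxIcc.1 (le_of_lt ht.1), ht.2⟩
      have h1 : ∀ᵐ t ∂volume.restrict (Ioc x 1), (t - x₀) * deriv a t ≤ K * a t :=
        ae_restrict_of_ae_restrict_of_subset hsubs hineq
      filter_upwards [h1, ae_restrict_mem measurableSet_Ioc] with t h2 h3
      have hpos' : (0:ℝ) < t - x₀ := by have := h3.1; have := hx.1; linarith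
      have hww : w t = (t - x₀) ^ (-K - 1) * (t - x₀) := by
        rw [hw_def]
        dsimp only
        rw [← Real.rpow_add_one (ne_of_gt hpos') (-K - 1)]
        norm_num
      show deriv a t * w t + a t * w' t ≤ 0
      rw [hww, hw'_def]
      have hfac : deriv a t * ((t - x₀) ^ (-K - 1) * (t - x₀))
          + a t * (-K * (t - x₀) ^ (-K - 1))
          = (t - x₀) ^ (-K - 1) * ((t - x₀) * deriv a t - K * a t) := by ring
      rw [hfac]
      exact mul_nonpos_iff.mpr (Or.inl ⟨Real.rpow_nonneg hpos'.le _, by linarith⟩)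
    have h4 : a 1 * w 1 - a x * w x ≤ 0 := by rw [hid]; exact hle
    simp only [hw_def] at h4
    linarith
  -- left-side lower bound
  have hL : ∀ x ∈ Ioo 0 x₀, a 0 * x₀ ^ (-K) ≤ a x * (x₀ - x) ^ (-K) := by
    intro x hx
    set w : ℝ → ℝ := fun t => (x₀ - t) ^ (-K) with hw_def
    set w' : ℝ → ℝ := fun t => K * (x₀ - t) ^ (-K - 1) with hw'_def
    have hwderiv : ∀ t ∈ Icc 0 x, HasDerivAt w (w' t) t := by
      intro t ht
      have hpos' : (0:ℝ) < x₀ - t := by have := ht.2; have := hx.2; linarith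
      have h1 : HasDerivAt (fun y : ℝ => x₀ - y) (-1) t := by
        simpa using (hasDerivAt_id t).const_sub x₀
      have h2 : HasDerivAt (fun u : ℝ => u ^ (-K)) ((-K) * (x₀ - t) ^ (-K - 1)) (x₀ - t) :=
        Real.hasDerivAt_rpow_const (Or.inl (ne_of_gt hpos'))
      have h3 := h2.comp t h1
      have h4 : HasDerivAt w ((-K) * (x₀ - t) ^ (-K - 1) * (-1)) t := by
        simpa [hw_def, Function.comp_def] using h3
      convert h4 using 1
      rw [hw'_def]; ring
    have hw'cont : ContinuousOn w' (Icc 0 x) := by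
      apply ContinuousOn.mul continuousOn_const
      apply ContinuousOn.rpow_const (continuousOn_const.sub continuousOn_id)
      intro t ht
      left
      have hpos' : (0:ℝ) < x₀ - t := by have := ht.2; have := hx.2; linarith
      exact ne_of_gt hpos'
    have hxIcc : x ∈ Icc (0:ℝ) 1 := ⟨le_of_lt hx.1, le_of_lt (lt_trans hx.2 hx1)⟩
    have h0Icc : (0:ℝ) ∈ Icc (0:ℝ) 1 := ⟨le_rfl, zero_le_one⟩
    have hA : ∀ s ∈ Icc 0 x, a s - a 0 = ∫ t in Ioc 0 s, deriv a t := fun s hs =>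
      hsub 0 s h0Icc ⟨hs.1, le_trans hs.2 hxIcc.2⟩ hs.1
    have hfx : IntegrableOn (deriv a) (Icc 0 x) :=
      hfint.mono_set (Icc_subset_Icc le_rfl hxIcc.2)
    have hid := my_ibp2 (le_of_lt hx.1) hfx hA hwderiv hw'cont
    have hle : 0 ≤ ∫ t in Ioc 0 x, (deriv a t * w t + a t * w' t) := by
      apply integral_nonneg_of_ae
      have hsubs : Ioc 0 x ⊆ Icc (0:ℝ) 1 := fun t ht =>
        ⟨le_of_lt ht.1, le_trans ht.2 hxIcc.2⟩
      have h1 : ∀ᵐ t ∂volume.restrict (Ioc 0 x), (t - x₀) * deriv a t ≤ K * a t :=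
        ae_restrict_of_ae_restrict_of_subset hsubs hineq
      filter_upwards [h1, ae_restrict_mem measurableSet_Ioc] with t h2 h3
      have hpos' : (0:ℝ) < x₀ - t := by have := h3.2; have := hx.2; linarith
      have hww : w t = (x₀ - t) ^ (-K - 1) * (x₀ - t) := by
        rw [hw_def]
        dsimp only
        rw [← Real.rpow_add_one (ne_of_gt hpos') (-K - 1)]
        norm_num
      show 0 ≤ deriv a t * w t + a t * w' t
      rw [hww, hw'_def]
      have hfac : deriv a t * ((x₀ - t) ^ (-K - 1) * (x₀ - t))
          + a t * (K * (x₀ - t) ^ (-K - 1))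
          = (x₀ - t) ^ (-K - 1) * (K * a t - (t - x₀) * deriv a t) := by ring
      rw [hfac]
      exact mul_nonneg (Real.rpow_nonneg hpos'.le _) (by linarith)
    have h4 : 0 ≤ a x * w x - a 0 * w 0 := by rw [hid]; exact hle
    simp only [hw_def, sub_zero] at h4
    linarith
  -- positive constants
  set c₁ : ℝ := a 1 * (1 - x₀) ^ (-K) with hc₁_def
  set c₂ : ℝ := a 0 * x₀ ^ (-K) with hc₂_def
  have hc1 : 0 < c₁ :=
    mul_pos (hpos 1 ⟨zero_le_one, le_rfl⟩ (ne_of_gt hx1))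
      (Real.rpow_pos_of_pos (by linarith) _)
  have hc2 : 0 < c₂ :=
    mul_pos (hpos 0 ⟨le_rfl, zero_le_one⟩ (ne_of_lt hx0))
      (Real.rpow_pos_of_pos hx0 _)
  set c : ℝ := min c₁ c₂ with hc_def
  have hc : 0 < c := lt_min hc1 hc2
  -- dominating function
  have hi_right : IntegrableOn (fun x => |x - x₀| ^ (-K)) (Ioc x₀ 1) := by
    have h0 : IntervalIntegrable (fun x : ℝ => x ^ (-K)) volume 0 (1 - x₀) :=
      intervalIntegral.intervalIntegrable_rpow' (by linarith)
    have h1 := h0.comp_sub_right x₀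
    rw [zero_add, sub_add_cancel] at h1
    have h2 : IntegrableOn (fun x => (x - x₀) ^ (-K)) (Ioc x₀ 1) :=
      (intervalIntegrable_iff_integrableOn_Ioc_of_le (le_of_lt hx1)).mp h1
    exact IntegrableOn.congr_fun h2
      (fun x hx => by rw [abs_of_pos (sub_pos.mpr hx.1)]) measurableSet_Ioc
  have hi_left : IntegrableOn (fun x => |x - x₀| ^ (-K)) (Ioc 0 x₀) := by
    have h0 : IntervalIntegrable (fun x : ℝ => x ^ (-K)) volume 0 x₀ :=
      intervalIntegral.intervalIntegrable_rpow' (by linarith)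
    have h1 := h0.comp_sub_left x₀
    rw [sub_zero, sub_self] at h1
    have h2 : IntegrableOn (fun x => (x₀ - x) ^ (-K)) (Ioc 0 x₀) :=
      (intervalIntegrable_iff_integrableOn_Ioc_of_le (le_of_lt hx0)).mp h1.symm
    exact IntegrableOn.congr_fun h2
      (fun x hx => by
        rw [abs_sub_comm, abs_of_nonneg (sub_nonneg.mpr hx.2)]) measurableSet_Ioc
  have hb : IntegrableOn (fun x => |x - x₀| ^ (-K)) (Ioo 0 1) := by
    apply (hi_left.union hi_right).mono_set
    intro x hx
    rcases le_or_gt x x₀ with h | h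
    · exact Or.inl ⟨hx.1, h⟩
    · exact Or.inr ⟨h, le_of_lt hx.2⟩
  have hg : IntegrableOn (fun x => |x - x₀| ^ (-K) / c) (Ioo 0 1) := hb.div_const c
  -- measurability
  have hFc : ContinuousOn (fun x => a 0 + ∫ t in (0:ℝ)..x, deriv a t) (Icc (0:ℝ) 1) := by
    apply continuousOn_const.add
    have h1 : IntegrableOn (deriv a) (uIcc (0:ℝ) 1) := by
      rw [uIcc_of_le zero_le_one]; exact hfint
    have h2 := intervalIntegral.continuousOn_primitive_interval h1
    rwa [uIcc_of_le zero_le_one] at h2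
  have haesm : AEStronglyMeasurable (fun x => 1 / a x) (volume.restrict (Ioo 0 1)) := by
    have h1 : AEMeasurable (fun x => a 0 + ∫ t in (0:ℝ)..x, deriv a t)
        (volume.restrict (Ioo 0 1)) :=
      (hFc.mono Ioo_subset_Icc_self).aemeasurable measurableSet_Ioo
    have h2 : AEMeasurable (fun x => 1 / (a 0 + ∫ t in (0:ℝ)..x, deriv a t))
        (volume.restrict (Ioo 0 1)) := aemeasurable_const.div h1
    apply h2.aestronglyMeasurable.congr
    filter_upwards [ae_restrict_mem measurableSet_Ioo] with x hx
    rw [← hrep x (Ioo_subset_Icc_self hx)]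
  -- conclude
  apply Integrable.mono' hg haesm
  have hxne : ∀ᵐ x ∂volume.restrict (Ioo (0:ℝ) 1), x ≠ x₀ := by
    apply ae_restrict_of_ae
    rw [ae_iff]
    have hset : {x : ℝ | ¬x ≠ x₀} = {x₀} := by ext y; simp
    rw [hset]
    exact measure_singleton x₀
  filter_upwards [ae_restrict_mem measurableSet_Ioo, hxne] with x hx hne
  have hax : 0 < a x := hpos x (Ioo_subset_Icc_self hx) hne
  have hcb : c ≤ a x * |x - x₀| ^ (-K) := by
    rcases lt_or_gt_of_ne hne with h | h
    · have hb2 := hL x ⟨hx.1, h⟩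
      rw [abs_sub_comm, abs_of_pos (sub_pos.mpr h)]
      exact le_trans (min_le_right _ _) hb2
    · have hb2 := hR x ⟨h, hx.2⟩
      rw [abs_of_pos (sub_pos.mpr h)]
      exact le_trans (min_le_left _ _) hb2
  rw [Real.norm_eq_abs, abs_of_pos (by positivity : (0:ℝ) < 1 / a x),
    div_le_div_iff₀ hax hc, one_mul, mul_comm]
  exact hcb
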